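/- Let u, v be real numbers with 0 < u ≤ v, u + v = e and uv = r for integers e, r, and suppose the power series expansion of s^d(p − qst)/((1−ust)(1−vst)) in ℤ[s^{±1}][[t]] has all coefficients nonnegative integers, where p ≥ 1, q ≥ 0 are integers. If additionally infinitely many coefficients are positive (the module is not free) and q = vp, then u ∈ ℤ. -/

import Mathlib

/-- the integrality conclusion of Corollary 1.6. Let `0 < u ≤ v`
be real with `u + v = e` and `u·v = r` for integers `e, r`, and suppose all the
coefficients of the expansion of `s^d(p − q s t)/((1−ust)(1−vst))`, equivalently
(on the diagonal) of `(p − qt)/((1−ut)(1−vt)) = Σ c_i t^i`, are nonnegative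
integers, with `p ≥ 1`, `q ≥ 0`. If infinitely many coefficients are positive
(the module is not free) and `q = v·p`, then `u ∈ ℤ`. -/
theorem stmt19 (e r : ℤ) (u v : ℝ) (hu : 0 < u) (huv : u ≤ v)
    (hsum : u + v = (e : ℝ)) (hprod : u * v = (r : ℝ))
    (p q : ℕ) (hp : 1 ≤ p) (d : ℤ)
    (c : ℕ → ℝ)
    (hc : (PowerSeries.mk c) *
        ((1 - PowerSeries.C u * PowerSeries.X) * (1 - PowerSeries.C v * PowerSeries.X)) =
      PowerSeries.C (p : ℝ) - PowerSeries.C (q : ℝ) * PowerSeries.X)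
    (hint : ∀ i : ℕ, ∃ n : ℕ, c i = (n : ℝ))
    (hinf : ∀ N : ℕ, ∃ i : ℕ, N ≤ i ∧ 0 < c i)
    (hq : (q : ℝ) = v * p) :
    ∃ n : ℤ, u = (n : ℝ) := by
  -- Extract coefficients 0 and 1 of the power-series identity.
  have hc' : (PowerSeries.mk c) * (1 - PowerSeries.C (u+v) * PowerSeries.X
      + PowerSeries.C (u*v) * (PowerSeries.X * PowerSeries.X)) =
      PowerSeries.C (p : ℝ) - PowerSeries.C (q : ℝ) * PowerSeries.X := by
    rw [← hc]; ring_nf; simp [map_add, map_mul]; ring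
  have hq' := hq
  generalize hP : ((p:ℕ):ℝ) = P at hc' hq'
  generalize hQ : ((q:ℕ):ℝ) = Q at hc' hq'
  have h0 := congrArg (PowerSeries.coeff 0) hc'
  have h1 := congrArg (PowerSeries.coeff 1) hc'
  simp [mul_sub, mul_add, mul_left_comm _ (PowerSeries.mk c), PowerSeries.coeff_C_mul,
    PowerSeries.coeff_one, ← mul_assoc, mul_comm _ (PowerSeries.X (R:=ℝ)),
    PowerSeries.coeff_succ_mul_X] at h0 h1
  have hz : (PowerSeries.coeff 1) (PowerSeries.X*PowerSeries.X*PowerSeries.mk c) = 0 := by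
    rw [mul_assoc]
    simpa using PowerSeries.coeff_succ_X_mul 0 (PowerSeries.X*PowerSeries.mk c)
  rw [hz] at h1
  simp at h1
  -- Deduce c 1 = u * p.
  have hc1 : c 1 = u * p := by
    have : c 1 = (u + v) * c 0 - Q := by linarith
    rw [this, h0, hq']; rw [← hP]; ring
  obtain ⟨n1, hn1⟩ := hint 1
  have hpne : (p : ℝ) ≠ 0 := by positivity
  -- u is rational: u = n1 / p.
  set x : ℚ := (n1 : ℚ) / (p : ℚ) with hx
  have hux : u = (x : ℝ) := by
    rw [hx]; push_cast; rw [eq_div_iff hpne]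
    rw [← hc1, hn1]
  -- u is a root of the monic integer polynomial X² - eX + r, hence so is x.
  have hroot : x ^ 2 - (e : ℚ) * x + (r : ℚ) = 0 := by
    have hr : u ^ 2 - (e : ℝ) * u + (r : ℝ) = 0 := by
      rw [← hsum, ← hprod]; ring
    have : ((x ^ 2 - (e : ℚ) * x + (r : ℚ) : ℚ) : ℝ) = 0 := by
      push_cast
      rw [← hux]; exact hr
    exact_mod_cast this
  have hint' : IsIntegral ℤ x := by
    refine ⟨Polynomial.X ^ 2 - Polynomial.C e * Polynomial.X + Polynomial.C r, ?_, ?_⟩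
    · monicity!
    · simp only [Polynomial.eval₂_add, Polynomial.eval₂_sub, Polynomial.eval₂_mul,
        Polynomial.eval₂_pow, Polynomial.eval₂_X, Polynomial.eval₂_C]
      simpa using hroot
  obtain ⟨y, hy⟩ := IsIntegrallyClosed.isIntegral_iff.mp hint'
  exact ⟨y, by rw [hux, ← hy]; norm_num⟩
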